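/- Let B be an n×n symmetric matrix over a field F, let γ ⊆ {1,…,n} with |γ| = k ≤ rank B be such that B[γ] is nonsingular, and let C = B/B[γ] be the Schur complement of B[γ] in B, with indexing inherited from B. Then for every j with 1 ≤ j ≤ n − k: if every quasi-principal minor of B of order j + k is nonzero, then every quasi-principal minor of C of order j is nonzero; and if every quasi-principal minor of B of order j + k is zero, then every quasi-principal minor of C of order j is zero. -/
import Mathlib


open Matrix

/-- The minor of a square matrix `B` lying in the rows indexed by `α` and the columns
indexed by `β` (each listed in increasing order); junk value `0` if `α.card ≠ β.card`. -/
def qMinor {R : Type*} [CommRing R] {m : Type*} [Fintype m] [LinearOrder m]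
    (B : Matrix m m R) (α β : Finset m) : R :=
  if h : β.card = α.card then
    (Matrix.of fun i j : Fin α.card =>
      B (α.orderEmbOfFin rfl i) (β.orderEmbOfFin h j)).det
  else 0

/-- `α` and `β` index a quasi-principal submatrix of order `k`, i.e.
`|α| = |β| = k` and `k - 1 ≤ |α ∩ β| (≤ k)`. -/
def IsQPPair {m : Type*} [DecidableEq m] (k : ℕ) (α β : Finset m) : Prop :=
  α.card = k ∧ β.card = k ∧ k - 1 ≤ (α ∩ β).card

/-- All quasi-principal minors of `B` of order `k` are nonzero. -/
def QPAllNonzero {R : Type*} [CommRing R] {m : Type*} [Fintype m] [LinearOrder m]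
    (B : Matrix m m R) (k : ℕ) : Prop :=
  ∀ α β : Finset m, IsQPPair k α β → qMinor B α β ≠ 0

/-- All quasi-principal minors of `B` of order `k` are zero. -/
def QPAllZero {R : Type*} [CommRing R] {m : Type*} [Fintype m] [LinearOrder m]
    (B : Matrix m m R) (k : ℕ) : Prop :=
  ∀ α β : Finset m, IsQPPair k α β → qMinor B α β = 0

/-- The three possible letters of a qpr-sequence. -/
inductive QPR : Type
  | A
  | S
  | N
deriving DecidableEq

open Classical in
/-- The letter of the qpr-sequence of `B` corresponding to order `k`:
`A` if all quasi-principal minors of order `k` are nonzero, `N` if all are zero,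
and `S` otherwise. -/
noncomputable def qprEntry {R : Type*} [CommRing R] {m : Type*} [Fintype m] [LinearOrder m]
    (B : Matrix m m R) (k : ℕ) : QPR :=
  if QPAllNonzero B k then QPR.A
  else if QPAllZero B k then QPR.N
  else QPR.S

/-- A sequence of letters `q 0, …, q (n-1)` (standing for `q_1 ⋯ q_n`) is attainable
over `F` if it is the qpr-sequence of an `n × n` symmetric matrix over `F`. -/
def Attainable (F : Type*) [Field F] {n : ℕ} (q : Fin n → QPR) : Prop :=
  ∃ B : Matrix (Fin n) (Fin n) F, B.IsSymm ∧ ∀ k : Fin n, qprEntry B ((k : ℕ) + 1) = q k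

/-- The Schur complement `B/B[γ] = B[γᶜ] - B[γᶜ, γ] B[γ]⁻¹ B[γ, γᶜ]`,
with rows and columns indexed by `γᶜ` (indexing inherited from `B`). -/
noncomputable def schurCompl {R : Type*} [CommRing R] {n : ℕ}
    (B : Matrix (Fin n) (Fin n) R) (γ : Finset (Fin n)) :
    Matrix ↥(γᶜ) ↥(γᶜ) R :=
  B.submatrix (fun i : ↥(γᶜ) => (i : Fin n)) (fun j : ↥(γᶜ) => (j : Fin n)) -
    B.submatrix (fun i : ↥(γᶜ) => (i : Fin n)) (fun j : ↥γ => (j : Fin n)) *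
      (B.submatrix (fun i : ↥γ => (i : Fin n)) fun j : ↥γ => (j : Fin n))⁻¹ *
      B.submatrix (fun i : ↥γ => (i : Fin n)) fun j : ↥(γᶜ) => (j : Fin n)

/-- The `(m+1) × (m+1)` matrix with block form `[[A, x], [yᵀ, b]]`. -/
def borderMat {R : Type*} [CommRing R] {m : ℕ} (A : Matrix (Fin m) (Fin m) R)
    (x y : Fin m → R) (b : R) : Matrix (Fin (m + 1)) (Fin (m + 1)) R :=
  Matrix.of fun i j =>
    if hi : (i : ℕ) < m then
      if hj : (j : ℕ) < m then A ⟨i, hi⟩ ⟨j, hj⟩ else x ⟨i, hi⟩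
    else
      if hj : (j : ℕ) < m then y ⟨j, hj⟩ else b

lemma det_submatrix_equiv_eq_zero_iff {F : Type*} [Field F] {m m' : Type*} [DecidableEq m] [Fintype m]
    [DecidableEq m'] [Fintype m'] (M : Matrix m m F) (e f : m' ≃ m) :
    (M.submatrix e f).det = 0 ↔ M.det = 0 := by
  have h1 : M.submatrix e f = (M.submatrix e e).submatrix id (f.trans e.symm) := by
    ext i j; simp
  rw [h1, Matrix.det_permute' (f.trans e.symm) (M.submatrix ⇑e ⇑e),
    Matrix.det_submatrix_equiv_self]
  have hs : ((Equiv.Perm.sign (f.trans e.symm) : ℤ) : F) ≠ 0 := by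
    rcases Int.units_eq_one_or (Equiv.Perm.sign (f.trans e.symm)) with h | h <;> simp [h]
  simp [hs]

lemma exists_equiv_comp {κ ι ι' : Type*} {r : ι → κ} {r' : ι' → κ}
    (hr : Function.Injective r) (hr' : Function.Injective r')
    (h : Set.range r = Set.range r') : ∃ e : ι' ≃ ι, ∀ i, r (e i) = r' i := by
  refine ⟨(Equiv.ofInjective r' hr').trans
    ((Equiv.setCongr h.symm).trans (Equiv.ofInjective r hr).symm), fun i => ?_⟩
  simp [Equiv.apply_ofInjective_symm hr]

lemma key_iff {F : Type*} [Field F] {n : ℕ} (B : Matrix (Fin n) (Fin n) F)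
    (γ : Finset (Fin n)) (hγ : qMinor B γ γ ≠ 0)
    (α β : Finset ↥(γᶜ)) (hab : β.card = α.card) :
    (qMinor (schurCompl B γ) α β = 0 ↔
      qMinor B (γ ∪ α.map (Function.Embedding.subtype _))
        (γ ∪ β.map (Function.Embedding.subtype _)) = 0) := by
  classical
  set k := γ.card with hk
  set j := α.card with hj
  set w : ↥γ → Fin n := fun i => (i : Fin n) with hw
  set v : ↥(γᶜ) → Fin n := fun i => (i : Fin n) with hv
  set a : Fin j → ↥(γᶜ) := fun i => α.orderEmbOfFin rfl i with ha
  set b : Fin j → ↥(γᶜ) := fun i => β.orderEmbOfFin hab i with hb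
  set Z : Matrix ↥γ ↥γ F := B.submatrix w w with hZdef
  -- det Z ≠ 0
  have hZ : Z.det ≠ 0 := by
    have he : ∀ i : Fin k, w ((γ.orderIsoOfFin rfl) i) = γ.orderEmbOfFin rfl i := by
      intro i; exact γ.coe_orderIsoOfFin_apply rfl i
    have : qMinor B γ γ = (Z.submatrix (γ.orderIsoOfFin rfl : Fin k → ↥γ)
        (γ.orderIsoOfFin rfl : Fin k → ↥γ)).det := by
      rw [qMinor, dif_pos rfl]
      congr 1
    rw [this] at hγ
    intro h0
    apply hγ
    have := Matrix.det_submatrix_equiv_self (γ.orderIsoOfFin (rfl : γ.card = k)).toEquiv Z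
    rw [show ((γ.orderIsoOfFin (rfl : γ.card = k)).toEquiv : Fin k → ↥γ)
      = (γ.orderIsoOfFin rfl : Fin k → ↥γ) from rfl] at this
    rw [this, h0]
  haveI : Invertible Z := Z.invertibleOfIsUnitDet (isUnit_iff_ne_zero.mpr hZ)
  -- block matrix
  set M : Matrix (↥γ ⊕ Fin j) (↥γ ⊕ Fin j) F :=
    Matrix.fromBlocks Z (B.submatrix w (v ∘ b)) (B.submatrix (v ∘ a) w)
      (B.submatrix (v ∘ a) (v ∘ b)) with hM
  have hdetM : M.det = Z.det * ((schurCompl B γ).submatrix a b).det := by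
    rw [hM, Matrix.det_fromBlocks₁₁, Matrix.invOf_eq_nonsing_inv]
    congr 1
  -- M as submatrix of B
  set R : ↥γ ⊕ Fin j → Fin n := Sum.elim w (v ∘ a) with hR
  set Cs : ↥γ ⊕ Fin j → Fin n := Sum.elim w (v ∘ b) with hCs
  have hMsub : M = B.submatrix R Cs := by
    ext i p
    cases i <;> cases p <;> rfl
  -- injectivity
  have hinj : ∀ g : Fin j → ↥(γᶜ), Function.Injective g →
      Function.Injective (Sum.elim w (v ∘ g)) := by
    intro g hg x y hxy
    cases x with
    | inl x =>
      cases y with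
      | inl y => exact congrArg Sum.inl (Subtype.ext hxy)
      | inr y =>
        have hxy' : (x : Fin n) = ((g y : ↥(γᶜ)) : Fin n) := hxy
        exact absurd (hxy' ▸ x.2) (Finset.mem_compl.mp (g y).2)
    | inr x =>
      cases y with
      | inl y =>
        have hxy' : ((g x : ↥(γᶜ)) : Fin n) = (y : Fin n) := hxy
        exact absurd (by rw [hxy']; exact y.2) (Finset.mem_compl.mp (g x).2)
      | inr y => exact congrArg Sum.inr (hg (Subtype.ext hxy))
  -- range
  have hrange : ∀ (g : Fin j → ↥(γᶜ)) (s : Finset ↥(γᶜ)), Set.range g = ↑s →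
      Set.range (Sum.elim w (v ∘ g)) =
        ↑(γ ∪ s.map (Function.Embedding.subtype (· ∈ γᶜ))) := by
    intro g s hgs
    rw [Set.Sum.elim_range, Finset.coe_union, Finset.coe_map, Set.range_comp, hgs]
    congr 1
    exact Subtype.range_coe
  -- disjointness and cards
  have hdisj : ∀ s : Finset ↥(γᶜ),
      Disjoint γ (s.map (Function.Embedding.subtype (· ∈ γᶜ))) := by
    intro s
    rw [Finset.disjoint_left]
    intro x hx hx2
    rcases Finset.mem_map.mp hx2 with ⟨y, _, rfl⟩
    exact Finset.mem_compl.mp y.2 hx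
  set αb := γ ∪ α.map (Function.Embedding.subtype (· ∈ γᶜ)) with hαb
  set βb := γ ∪ β.map (Function.Embedding.subtype (· ∈ γᶜ)) with hβb
  have hcardα : αb.card = k + j := by
    rw [hαb, Finset.card_union_of_disjoint (hdisj α), Finset.card_map]
  have hcardβ : βb.card = k + j := by
    rw [hβb, Finset.card_union_of_disjoint (hdisj β), Finset.card_map, hab]
  have hcc : βb.card = αb.card := by rw [hcardα, hcardβ]
  -- equivs
  obtain ⟨e, he⟩ := exists_equiv_comp (hinj a (α.orderEmbOfFin rfl).injective)
    (αb.orderEmbOfFin (rfl : αb.card = αb.card)).injective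
    (by rw [hrange a α (α.range_orderEmbOfFin rfl), Finset.range_orderEmbOfFin])
  obtain ⟨f, hf⟩ := exists_equiv_comp (hinj b (β.orderEmbOfFin hab).injective)
    (βb.orderEmbOfFin hcc).injective
    (by rw [hrange b β (β.range_orderEmbOfFin hab), Finset.range_orderEmbOfFin])
  have hL : qMinor (schurCompl B γ) α β = ((schurCompl B γ).submatrix a b).det := by
    rw [qMinor, dif_pos hab]; rfl
  have hRq : qMinor B αb βb =
      (B.submatrix (⇑(αb.orderEmbOfFin (rfl : αb.card = αb.card)))
        (⇑(βb.orderEmbOfFin hcc))).det := by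
    rw [qMinor, dif_pos hcc]; rfl
  have hsub : B.submatrix (⇑(αb.orderEmbOfFin (rfl : αb.card = αb.card)))
      (⇑(βb.orderEmbOfFin hcc)) = (B.submatrix R Cs).submatrix ⇑e ⇑f := by
    ext i p
    rw [Matrix.submatrix_apply, Matrix.submatrix_apply, ← he i, ← hf p]
    rfl
  rw [hL, hRq, hsub, det_submatrix_equiv_eq_zero_iff, ← hMsub, hdetM, mul_eq_zero]
  simp [hZ]

lemma isQPPair_irrel {m : Type*} {i1 i2 : DecidableEq m} {k : ℕ} {α β : Finset m}
    (h : @IsQPPair m i1 k α β) : @IsQPPair m i2 k α β := by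
  have : i1 = i2 := Subsingleton.elim _ _
  subst this
  exact h

lemma disj_map_compl {n : ℕ} (γ : Finset (Fin n)) (s : Finset ↥(γᶜ)) :
    Disjoint γ (s.map (Function.Embedding.subtype (· ∈ γᶜ))) := by
  rw [Finset.disjoint_left]
  intro x hx hx2
  rcases Finset.mem_map.mp hx2 with ⟨y, _, rfl⟩
  exact absurd hx (Finset.mem_compl.mp y.2)

lemma qp_transfer {n : ℕ} (γ : Finset (Fin n)) {j : ℕ} (hj : 1 ≤ j)
    (α β : Finset ↥(γᶜ)) (h : IsQPPair j α β) :
    IsQPPair (j + γ.card) (γ ∪ α.map (Function.Embedding.subtype (· ∈ γᶜ)))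
      (γ ∪ β.map (Function.Embedding.subtype (· ∈ γᶜ))) := by
  obtain ⟨h1, h2, h3⟩ := h
  refine ⟨?_, ?_, ?_⟩
  · rw [Finset.card_union_of_disjoint (disj_map_compl γ α), Finset.card_map, h1]
    omega
  · rw [Finset.card_union_of_disjoint (disj_map_compl γ β), Finset.card_map, h2]
    omega
  · rw [← Finset.union_inter_distrib_left, ← Finset.map_inter,
      Finset.card_union_of_disjoint (disj_map_compl γ _), Finset.card_map]
    omega

/-- Schur Complement Corollary: if `B` is symmetric, `B[γ]` is nonsingular
with `|γ| = k ≤ rank B`, and `C = B/B[γ]`, then for every `j` with `1 ≤ j ≤ n - k`: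
if all quasi-principal minors of `B` of order `j + k` are nonzero then all
quasi-principal minors of `C` of order `j` are nonzero, and likewise with
"nonzero" replaced by "zero". -/
theorem stmt_7 {F : Type*} [Field F] {n : ℕ} (B : Matrix (Fin n) (Fin n) F)
    (hB : B.IsSymm) (γ : Finset (Fin n)) (hcard : γ.card ≤ B.rank)
    (hγ : qMinor B γ γ ≠ 0) :
    ∀ j : ℕ, 1 ≤ j → j ≤ n - γ.card →
      (QPAllNonzero B (j + γ.card) → QPAllNonzero (schurCompl B γ) j) ∧
      (QPAllZero B (j + γ.card) → QPAllZero (schurCompl B γ) j) := by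
  intro j hj _
  constructor
  · intro hall α β hqp h0
    have hab : β.card = α.card := by rw [hqp.2.1, hqp.1]
    exact hall _ _ (isQPPair_irrel (qp_transfer γ hj α β (isQPPair_irrel hqp))) ((key_iff B γ hγ α β hab).mp h0)
  · intro hall α β hqp
    have hab : β.card = α.card := by rw [hqp.2.1, hqp.1]
    exact (key_iff B γ hγ α β hab).mpr (hall _ _ (isQPPair_irrel (qp_transfer γ hj α β (isQPPair_irrel hqp))))
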